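/- arXiv:1710.04978 — 5 statements merged into one kernel-verified Lean document; each statement's English description precedes it below -/
import Mathlib

section
/- A permutation π of [n] satisfies P(π) = identity if and only if π is a layered permutation, i.e., a direct sum of decreasing permutations: there exist indices 0 = i_0 < i_1 < … < i_m = n such that on each interval of positions (i_{t-1}, i_t] the values of π are exactly the integers i_{t-1}+1, …, i_t arranged in decreasing order. -/
/-- The identity permutation of `[n] = {1,…,n}` in one-line notation. -/
def idList (n : ℕ) : List ℕ := (List.range n).map (· + 1)

/-- `l` is (the one-line notation of) a permutation of `[n] = {1,…,n}`. -/
def IsPermOf (l : List ℕ) (n : ℕ) : Prop := l.Perm (idList n)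

/-- One pass of the pop-stack machine: `stack` holds the current content of the
stack (top first); a pop empties the whole stack onto the output. -/
def popAux : List ℕ → List ℕ → List ℕ
  | stack, [] => stack
  | stack, x :: xs =>
    match stack with
    | [] => popAux [x] xs
    | a :: _ => if x < a then popAux (x :: stack) xs else stack ++ popAux [x] xs

/-- The pop-stack sorting operator `P`, acting on one-line notations. -/
def popPass (l : List ℕ) : List ℕ := popAux [] l

/-- An operation sequence for permutations of `[n]`: a word of length `n+1` over
`{a, d}` (here `true` = `a`, `false` = `d`) beginning and ending with `a`. -/
def OpSeq (μ : List Bool) (n : ℕ) : Prop :=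
  μ.length = n + 1 ∧ μ.head? = some true ∧ μ.getLast? = some true

/-- Helper for blockwise reversal: `cur` is the current block, already reversed;
the `i`-th letter of the operation sequence precedes the `i`-th entry of the
permutation, and a letter `a = true` flushes the current block and starts a new one. -/
def revAux : List ℕ → List ℕ → List Bool → List ℕ
  | cur, [], _ => cur
  | cur, x :: xs, [] => revAux (x :: cur) xs []
  | cur, x :: xs, c :: cs =>
    if c then cur ++ revAux [x] xs cs else revAux (x :: cur) xs cs

/-- Blockwise reversal `rev(l, μ)` of `l` according to the operation sequence `μ`. -/
def rev (l : List ℕ) (μ : List Bool) : List ℕ := revAux [] l μ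

/-- Tail of the ascent/descent word of a list (letters `c_2 … c_{n+1}`). -/
def ascTail : List ℕ → List Bool
  | [] => []
  | [_] => [true]
  | x :: y :: rest => decide (x < y) :: ascTail (y :: rest)

/-- The ascent/descent word `w(π) = c_1 c_2 … c_{n+1}` of `π` (with `true` = `a`). -/
def ascWord (l : List ℕ) : List Bool := true :: ascTail l

/-- `L` is the decomposition of `π` into its maximal decreasing runs:
the blocks concatenate to `π`, each block is nonempty and strictly decreasing,
and at each boundary between consecutive blocks there is an ascent (maximality). -/
def RunDecomp (π : List ℕ) (L : List (List ℕ)) : Prop :=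
  π = L.flatten ∧ (∀ b ∈ L, b ≠ []) ∧ (∀ b ∈ L, b.Chain' (· > ·)) ∧
    L.Chain' (fun b c => ∀ x ∈ b.getLast?, ∀ y ∈ c.head?, x < y)

/-- The one-line notation of a permutation of `Fin n`, with values shifted to `{1,…,n}`. -/
def permToList {n : ℕ} (σ : Equiv.Perm (Fin n)) : List ℕ :=
  List.ofFn fun i => (σ i : ℕ) + 1

/-- The number of permutations of `[n]` sortable by `k` passes through a pop-stack. -/
def countSortable (k n : ℕ) : ℕ :=
  (Finset.univ.filter (fun σ : Equiv.Perm (Fin n) => popPass^[k] (permToList σ) = idList n)).card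

/-- A semitrace of order `k` and length `n`: permutations `α 1, …, α (k+1)` of `[n]`
with `α (k+1)` the identity, and operation sequences `μ 1, …, μ k`, such that
`α (i+1)` is the blockwise reversal of `α i` according to `μ i`. -/
def IsSemitrace (n k : ℕ) (α : ℕ → List ℕ) (μ : ℕ → List Bool) : Prop :=
  (∀ i, 1 ≤ i → i ≤ k + 1 → IsPermOf (α i) n) ∧
  (∀ i, 1 ≤ i → i ≤ k → OpSeq (μ i) n) ∧
  α (k + 1) = idList n ∧
  (∀ i, 1 ≤ i → i ≤ k → α (i + 1) = rev (α i) (μ i))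

/-- `a` and `b` lie in the same block of `σ` with respect to the operation sequence `μ`:
they occupy positions `p ≤ q` with no bar (letter `a = true`) strictly between them. -/
def SameBlock (σ : List ℕ) (μ : List Bool) (a b : ℕ) : Prop :=
  ∃ p q : ℕ, p ≤ q ∧ q < σ.length ∧
    ((σ.getD p 0 = a ∧ σ.getD q 0 = b) ∨ (σ.getD p 0 = b ∧ σ.getD q 0 = a)) ∧
    ∀ r, p < r → r ≤ q → μ.getD r false = false

/-- The number of descents of a list. -/
def descentCount (l : List ℕ) : ℕ :=
  ((List.range (l.length - 1)).filter (fun i => l.getD (i + 1) 0 < l.getD i 0)).length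

/-- The layered permutation with the given block sizes, starting with value `start + 1`:
each block consists of consecutive values arranged in decreasing order. -/
def layeredList : ℕ → List ℕ → List ℕ
  | _, [] => []
  | start, s :: rest =>
      ((List.range s).map (fun j => start + s - j)) ++ layeredList (start + s) rest

def idFrom (start m : ℕ) : List ℕ := (List.range m).map (fun j => j + start + 1)

lemma idFrom_length (start m : ℕ) : (idFrom start m).length = m := by simp [idFrom]

lemma idFrom_append (start k m : ℕ) :
    idFrom start (k + m) = idFrom start k ++ idFrom (start + k) m := by
  simp only [idFrom, List.range_add, List.map_append, List.map_map]
  refine congrArg _ (List.map_congr_left fun j _ => ?_)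
  simp [Function.comp]
  omega

lemma block_reverse (start s : ℕ) :
    ((List.range s).map (fun j => start + s - j)).reverse = idFrom start s := by
  apply List.ext_getElem
  · simp [idFrom]
  · intro i h1 h2
    simp only [idFrom, List.length_map, List.length_range, List.length_reverse] at h1 h2
    simp only [List.getElem_reverse, List.getElem_map, List.getElem_range, idFrom,
      List.length_map, List.length_range]
    omega

lemma popAux_length : ∀ (l stack : List ℕ), (popAux stack l).length = stack.length + l.length := by
  intro l
  induction l with
  | nil => intro stack; simp [popAux]
  | cons x xs ih =>
      intro stack
      cases stack with
      | nil => simp [popAux, ih, Nat.add_comm]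
      | cons a s =>
          simp only [popAux]
          split <;> simp [ih] <;> omega

lemma popAux_run : ∀ (r : List ℕ) (x : ℕ) (stack rest : List ℕ),
    List.Chain (· > ·) x r →
    (∀ y ∈ rest.head?, ¬ y < (x :: r).getLast (by simp)) →
    popAux (x :: stack) (r ++ rest) = (x :: r).reverse ++ (stack ++ popAux [] rest) := by
  intro r
  induction r with
  | nil =>
      intro x stack rest _ hlast
      cases rest with
      | nil => simp [popAux]
      | cons y ys =>
          have : ¬ y < x := by simpa using hlast y (by simp)
          simp [popAux, this]
  | cons z r' ih =>
      intro x stack rest hch hlast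
      rcases List.chain_cons.mp hch with ⟨hxz, hch'⟩
      have hz : z < x := hxz
      have h1 : popAux (x :: stack) ((z :: r') ++ rest)
          = popAux (z :: x :: stack) (r' ++ rest) := by
        simp [popAux, hz]
      rw [h1, ih z (x :: stack) rest hch' ?_]
      · simp
      · intro y hy
        have := hlast y hy
        rwa [List.getLast_cons (by simp)] at this

def splitRun : ℕ → List ℕ → List ℕ × List ℕ
  | _, [] => ([], [])
  | a, y :: ys =>
      if y < a then ((y :: (splitRun y ys).1), (splitRun y ys).2) else ([], y :: ys)

lemma splitRun_spec : ∀ (xs : List ℕ) (a : ℕ),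
    xs = (splitRun a xs).1 ++ (splitRun a xs).2 ∧
    List.Chain (· > ·) a (splitRun a xs).1 ∧
    ∀ y ∈ (splitRun a xs).2.head?, ¬ y < (a :: (splitRun a xs).1).getLast (by simp) := by
  intro xs
  induction xs with
  | nil => intro a; simp [splitRun, List.Chain]
  | cons y ys ih =>
      intro a
      by_cases hy : y < a
      · obtain ⟨h1, h2, h3⟩ := ih y
        refine ⟨?_, ?_, ?_⟩
        · simp only [splitRun, if_pos hy]
          simpa using h1
        · simp only [splitRun, if_pos hy]
          exact List.chain_cons.mpr ⟨hy, h2⟩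
        · simp only [splitRun, if_pos hy]
          intro z hz
          have := h3 z (by simpa [splitRun, hy] using hz)
          rwa [List.getLast_cons (by simp)]
      · refine ⟨by simp [splitRun, hy], by simp [splitRun, hy, List.Chain], ?_⟩
        intro z hz
        simp [splitRun, hy] at hz ⊢
        omega

lemma layered_mem : ∀ (sizes : List ℕ) (start : ℕ), ∀ y ∈ layeredList start sizes, start < y := by
  intro sizes
  induction sizes with
  | nil => simp [layeredList]
  | cons s rest ih =>
      intro start y hy
      rw [layeredList, List.mem_append] at hy
      rcases hy with hy | hy
      · obtain ⟨j, hj, rfl⟩ := List.mem_map.mp hy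
        have := List.mem_range.mp hj
        omega
      · have := ih (start + s) y hy
        omega

lemma popAux_layered : ∀ (sizes : List ℕ) (start : ℕ), (∀ s ∈ sizes, 0 < s) →
    popAux [] (layeredList start sizes) = idFrom start sizes.sum := by
  intro sizes
  induction sizes with
  | nil => intro start _; simp [layeredList, popAux, idFrom]
  | cons s rest ih =>
      intro start hpos
      have hs : 0 < s := hpos s (by simp)
      set block := (List.range s).map (fun j => start + s - j) with hblock
      have hlen : block.length = s := by simp [hblock]
      have hbne : block ≠ [] := by
        intro hb; rw [hb] at hlen; simp at hlen; omega
      obtain ⟨x, r, hxr⟩ := List.exists_cons_of_ne_nil hbne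
      have hpw : block.Pairwise (· > ·) := by
        rw [hblock, List.pairwise_map]
        refine (List.pairwise_lt_range (n := s)).imp_of_mem ?_
        intro a b ha hb hab
        have : b < s := List.mem_range.mp hb
        omega
      have hch : List.Chain (· > ·) x r := by
        have := (List.isChain_iff_pairwise.mpr hpw)
        rw [hxr] at this
        exact this
      have hbl : block.getLast hbne = start + 1 := by
        rw [List.getLast_eq_getElem]
        simp only [hblock, List.getElem_map, List.getElem_range, List.length_map,
          List.length_range]
        omega
      have hlast : (x :: r).getLast (by simp) = start + 1 := by
        have h2 : some ((x :: r).getLast (by simp)) = some (start + 1) := by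
          rw [← List.getLast?_eq_getLast, ← hxr, List.getLast?_eq_getLast hbne, hbl]
        exact Option.some.inj h2
      have hrest : ∀ y ∈ (layeredList (start + s) rest).head?, ¬ y < (x :: r).getLast (by simp) := by
        intro y hy
        have := layered_mem rest (start + s) y (List.mem_of_mem_head? hy)
        rw [hlast]
        omega
      have key : popAux [] (layeredList start (s :: rest)) =
          (x :: r).reverse ++ ([] ++ popAux [] (layeredList (start + s) rest)) := by
        show popAux [] (block ++ layeredList (start + s) rest) = _
        rw [hxr, List.cons_append]
        show popAux [x] (r ++ layeredList (start + s) rest) = _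
        exact popAux_run r x [] _ hch hrest
      rw [key, ← hxr, hblock, block_reverse, ih (start + s) (fun t ht => hpos t (by simp [ht])),
        List.nil_append, ← idFrom_append]
      simp [List.sum_cons]

lemma sorted_layered : ∀ (m : ℕ) (π : List ℕ) (start : ℕ), popAux [] π = idFrom start m →
    ∃ sizes : List ℕ, (∀ s ∈ sizes, 0 < s) ∧ sizes.sum = m ∧ π = layeredList start sizes := by
  intro m
  induction m using Nat.strong_induction_on with
  | _ m IH =>
      intro π start hpop
      cases π with
      | nil =>
          have : m = 0 := by
            have := congrArg List.length hpop
            simpa [popAux, idFrom_length] using this.symm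
          exact ⟨[], by simp, by simp [this], by simp [layeredList]⟩
      | cons x xs =>
          obtain ⟨hsplit, hch, hlastc⟩ := splitRun_spec xs x
          set r := (splitRun x xs).1 with hr
          set rest := (splitRun x xs).2 with hrest
          have hpop2 : (x :: r).reverse ++ ([] ++ popAux [] rest) = idFrom start m := by
            rw [← popAux_run r x [] rest hch hlastc, ← hpop]
            show _ = popAux [] (x :: xs)
            rw [hsplit]
            rfl
          set k := r.length + 1 with hk
          have hklen : ((x :: r).reverse).length = k := by simp [hk]
          have hlenm : k + rest.length = m := by
            have h := congrArg List.length hpop2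
            simp [popAux_length, idFrom_length, List.length_append, List.length_reverse] at h
            omega
          have hkm : k ≤ m := by omega
          have hid : idFrom start m = idFrom start k ++ idFrom (start + k) (m - k) := by
            rw [← idFrom_append]
            congr 1
            omega
          rw [hid] at hpop2
          obtain ⟨hA, hB⟩ := List.append_inj hpop2 (by simp [hklen, idFrom_length, hk])
          have hxr : x :: r = ((List.range k).map (fun j => start + k - j)) := by
            have := block_reverse start k
            rw [← hA] at this
            have := congrArg List.reverse this
            simpa using this.symm
          rw [List.nil_append] at hB
          obtain ⟨sizes', hpos', hsum', hrest'⟩ := IH (m - k) (by omega) rest (start + k) hB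
          refine ⟨k :: sizes', ?_, ?_, ?_⟩
          · intro t ht
            rcases List.mem_cons.mp ht with h | h
            · omega
            · exact hpos' t h
          · simp [hsum']; omega
          · show x :: xs = layeredList start (k :: sizes')
            rw [hsplit]
            show (x :: r) ++ rest = _
            rw [hxr, hrest']
            rfl

/-- A permutation of `[n]` is sorted by one pop-stack pass iff it is layered,
i.e. a direct sum of decreasing permutations. -/
theorem one_pass_sortable_iff_layered (n : ℕ) (π : List ℕ) (h : IsPermOf π n) :
    popPass π = idList n ↔
      ∃ sizes : List ℕ, (∀ s ∈ sizes, 0 < s) ∧ sizes.sum = n ∧ π = layeredList 0 sizes := by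
  constructor
  · intro hp
    have hpop : popAux [] π = idFrom 0 n := by
      rw [← popPass]
      rw [hp]
      rfl
    exact sorted_layered n π 0 hpop
  · rintro ⟨sizes, hpos, hsum, rfl⟩
    have := popAux_layered sizes 0 hpos
    rw [popPass, this, hsum]
    rfl
end

section
/- For every permutation σ of [n], every maximal decreasing run of P(σ) has length at most 3. Equivalently, P(σ) contains no four consecutive entries in decreasing order. -/
lemma chain'_getD_lt {l : List ℕ} (h : l.Chain' (· < ·)) {i : ℕ} (hi : i + 1 < l.length) :
    l.getD i 0 < l.getD (i + 1) 0 := by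
  rw [List.getD_eq_getElem l 0 (by omega), List.getD_eq_getElem l 0 hi]
  simpa using List.isChain_iff_getElem.mp h i (by omega)

lemma flatten_no4 : ∀ (L : List (List ℕ)), (∀ b ∈ L, b ≠ []) →
    (∀ b ∈ L, b.Chain' (· < ·)) →
    L.Chain' (fun u v => u.headI ≤ v.getLastI) →
    ∀ i, i + 3 < L.flatten.length →
      ¬(L.flatten.getD (i + 3) 0 < L.flatten.getD (i + 2) 0 ∧
        L.flatten.getD (i + 2) 0 < L.flatten.getD (i + 1) 0 ∧
        L.flatten.getD (i + 1) 0 < L.flatten.getD i 0) := by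
  intro L
  induction L with
  | nil => intro _ _ _ i hi; simp at hi
  | cons b L ih =>
    intro hne hcs hch i hi ⟨h3, h2, h1⟩
    have hlenf : (b :: L).flatten.length = b.length + L.flatten.length := by
      simp
    rcases lt_trichotomy (i + 1) b.length with hb | hb | hb
    · -- descent inside b : impossible
      have e0 : (b :: L).flatten.getD i 0 = b.getD i 0 := by
        rw [List.flatten_cons, List.getD_append _ _ _ _ (by omega)]
      have e1 : (b :: L).flatten.getD (i + 1) 0 = b.getD (i + 1) 0 := by
        rw [List.flatten_cons, List.getD_append _ _ _ _ (by omega)]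
      rw [e0, e1] at h1
      exact absurd (chain'_getD_lt (hcs b (by simp)) hb) (by omega)
    · -- boundary : i + 1 = b.length
      have hLf : 3 ≤ L.flatten.length := by omega
      obtain ⟨c, L', rfl⟩ : ∃ c L', L = c :: L' := by
        cases L with
        | nil => simp at hLf
        | cons c L' => exact ⟨c, L', rfl⟩
      have e1 : (b :: c :: L').flatten.getD (i + 1) 0 = (c :: L').flatten.getD 0 0 := by
        rw [List.flatten_cons, List.getD_append_right _ _ _ _ (by omega)]
        congr 1; omega
      have e2 : (b :: c :: L').flatten.getD (i + 2) 0 = (c :: L').flatten.getD 1 0 := by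
        rw [List.flatten_cons, List.getD_append_right _ _ _ _ (by omega)]
        congr 1; omega
      have e3 : (b :: c :: L').flatten.getD (i + 3) 0 = (c :: L').flatten.getD 2 0 := by
        rw [List.flatten_cons, List.getD_append_right _ _ _ _ (by omega)]
        congr 1; omega
      have hcne : c ≠ [] := hne c (by simp)
      by_cases hc2 : 2 ≤ c.length
      · -- c has ≥ 2 elements : ascent at positions i+1, i+2
        have f1 : (c :: L').flatten.getD 0 0 = c.getD 0 0 := by
          rw [List.flatten_cons, List.getD_append c L'.flatten 0 0 (by omega)]
        have f2 : (c :: L').flatten.getD 1 0 = c.getD 1 0 := by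
          rw [List.flatten_cons, List.getD_append c L'.flatten 0 1 (by omega)]
        rw [e1, f1] at h2; rw [e2, f2] at h2
        have hcc := chain'_getD_lt (l := c) (hcs c (by simp)) (i := 0) (by omega)
        simp only [Nat.zero_add] at hcc
        omega
      · obtain ⟨y, rfl⟩ : ∃ y, c = [y] := by
          rcases c with _ | ⟨y, _ | _⟩ <;> simp_all
        have hLf' : 2 ≤ L'.flatten.length := by
          rw [show ([y] :: L').flatten = y :: L'.flatten from by simp] at hLf
          simp only [List.length_cons] at hLf; omega
        obtain ⟨d, L'', rfl⟩ : ∃ d L'', L' = d :: L'' := by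
          cases L' with
          | nil => simp at hLf'
          | cons d L'' => exact ⟨d, L'', rfl⟩
        have hdne : d ≠ [] := hne d (by simp)
        have f1 : ([y] :: d :: L'').flatten.getD 0 0 = y := by simp
        have f2 : ([y] :: d :: L'').flatten.getD 1 0 = (d :: L'').flatten.getD 0 0 := by
          simp [List.flatten_cons]
        have f2' : (d :: L'').flatten.getD 0 0 = d.getD 0 0 := by
          rw [List.flatten_cons,
            List.getD_append d L''.flatten 0 0 (by cases d <;> simp_all)]
        by_cases hd2 : 2 ≤ d.length
        · have f3 : ([y] :: d :: L'').flatten.getD 2 0 = d.getD 1 0 := by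
            rw [List.flatten_cons]
            rw [List.getD_append_right _ _ _ _ (by simp)]
            rw [List.flatten_cons]
            rw [List.getD_append d L''.flatten 0 (2 - [y].length) (by simp; omega)]
            norm_num
          rw [e2, f2, f2'] at h3; rw [e3, f3] at h3
          have hcc := chain'_getD_lt (l := d) (hcs d (by simp)) (i := 0) (by omega)
          simp only [Nat.zero_add] at hcc
          omega
        · obtain ⟨z, rfl⟩ : ∃ z, d = [z] := by
            rcases d with _ | ⟨z, _ | _⟩ <;> simp_all
          have hyz : y ≤ z := by
            have := (List.isChain_cons_cons.mp hch.tail).1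
            simpa [List.getLastI] using this
          rw [e1, f1] at h2; rw [e2, f2, f2'] at h2
          simp at h2; omega
    · -- i entirely past b : use induction hypothesis
      obtain ⟨k, rfl⟩ : ∃ k, i = b.length + k := ⟨i - b.length, by omega⟩
      have e : ∀ j, (b :: L).flatten.getD (b.length + j) 0 = L.flatten.getD j 0 := by
        intro j
        rw [List.flatten_cons, List.getD_append_right _ _ _ _ (by omega)]
        congr 1; omega
      refine ih (fun x hx => hne x (List.mem_cons_of_mem _ hx))
        (fun x hx => hcs x (List.mem_cons_of_mem _ hx)) hch.tail k (by omega) ⟨?_, ?_, ?_⟩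
      · rw [← e (k + 3), ← e (k + 2)]
        rw [show b.length + (k + 3) = b.length + k + 3 by omega,
            show b.length + (k + 2) = b.length + k + 2 by omega]
        exact h3
      · rw [← e (k + 2), ← e (k + 1)]
        rw [show b.length + (k + 2) = b.length + k + 2 by omega,
            show b.length + (k + 1) = b.length + k + 1 by omega]
        exact h2
      · rw [← e (k + 1), ← e k]
        rw [show b.length + (k + 1) = b.length + k + 1 by omega]
        exact h1

lemma popAux_spec : ∀ (xs s : List ℕ), s ≠ [] → s.Chain' (· < ·) →
    ∃ L : List (List ℕ), popAux s xs = L.flatten ∧ L ≠ [] ∧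
      (∀ b ∈ L, b ≠ []) ∧ (∀ b ∈ L, b.Chain' (· < ·)) ∧
      L.Chain' (fun u v => u.headI ≤ v.getLastI) ∧
      L.headI.getLastI = s.getLastI := by
  intro xs
  induction xs with
  | nil =>
    intro s hs hc
    exact ⟨[s], by simp [popAux], by simp, by simpa, by simpa, List.isChain_singleton _, by simp⟩
  | cons x xs ih =>
    intro s hs hc
    obtain ⟨a, t, rfl⟩ := List.exists_cons_of_ne_nil hs
    by_cases hxa : x < a
    · obtain ⟨L, h1, h2, h3, h4, h5, h6⟩ := ih (x :: a :: t) (by simp) (hc.cons (by simpa using hxa))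
      refine ⟨L, ?_, h2, h3, h4, h5, ?_⟩
      · rw [show popAux (a :: t) (x :: xs) = popAux (x :: a :: t) xs from by
          simp [popAux, hxa]]
        exact h1
      · rw [h6, List.getLastI_eq_getLast?, List.getLastI_eq_getLast?,
          List.getLast?_cons_cons]
    · obtain ⟨L, h1, h2, h3, h4, h5, h6⟩ := ih [x] (by simp) (List.isChain_singleton _)
      obtain ⟨u, L2, rfl⟩ := List.exists_cons_of_ne_nil h2
      refine ⟨(a :: t) :: u :: L2, ?_, by simp, ?_, ?_, ?_, by simp⟩
      · rw [show popAux (a :: t) (x :: xs) = (a :: t) ++ popAux [x] xs from by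
          simp [popAux, hxa], h1]
        simp
      · intro b hb
        rcases List.mem_cons.mp hb with rfl | hb
        · simp
        · exact h3 b hb
      · intro b hb
        rcases List.mem_cons.mp hb with rfl | hb
        · exact hc
        · exact h4 b hb
      · refine List.isChain_cons_cons.mpr ⟨?_, h5⟩
        have hx : u.getLastI = x := by simpa [List.getLastI] using h6
        simp [hx]
        omega

/-- For every permutation `σ` of `[n]`, every maximal decreasing run of `P(σ)` has
length at most `3`; equivalently, `P(σ)` has no four consecutive entries in
decreasing order. -/
theorem popPass_no_four_decreasing (n : ℕ) (σ : List ℕ) (h : IsPermOf σ n)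
    (i : ℕ) (hi : i + 3 < (popPass σ).length) :
    ¬((popPass σ).getD (i + 3) 0 < (popPass σ).getD (i + 2) 0 ∧
      (popPass σ).getD (i + 2) 0 < (popPass σ).getD (i + 1) 0 ∧
      (popPass σ).getD (i + 1) 0 < (popPass σ).getD i 0) := by
  cases σ with
  | nil => simp [popPass, popAux] at hi
  | cons x xs =>
    have hpp : popPass (x :: xs) = popAux [x] xs := by simp [popPass, popAux]
    obtain ⟨L, h1, _, h3, h4, h5, _⟩ := popAux_spec xs [x] (by simp) (List.isChain_singleton _)
    rw [hpp, h1] at hi ⊢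
    exact flatten_no4 L h3 h4 h5 i hi
end

section
/- For any fixed k ≥ 1, the map sending a k-pop-stack-sortable permutation π of [n] to the tuple (w(π), w(P(π)), …, w(P^{k-1}(π))) of operation sequences is injective; i.e., a k-pop-stack-sortable permutation is uniquely determined by its sorting plan. -/
lemma revAux_nil (cur : List ℕ) (cs : List Bool) : revAux cur [] cs = cur := by
  cases cs <;> rfl

lemma revAux_replicate_false (l : List ℕ) : ∀ (cur rest : List ℕ) (cs : List Bool),
    revAux cur (l ++ rest) (List.replicate l.length false ++ cs) =
      revAux (l.reverse ++ cur) rest cs := by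
  induction l with
  | nil => intro cur rest cs; simp
  | cons x l ih =>
    intro cur rest cs
    simp only [List.cons_append, List.length_cons, List.replicate_succ, revAux,
      if_neg (by simp : ¬ (false = true))]
    simpa using ih (x :: cur) rest cs

lemma popRev_key (xs : List ℕ) : ∀ (a : ℕ) (s cur : List ℕ),
    List.Chain' (· ≠ ·) (a :: xs) →
    revAux cur (popAux (a :: s) xs)
        (true :: (List.replicate s.length false ++ ascTail (a :: xs)))
      = cur ++ (a :: s).reverse ++ xs := by
  induction xs with
  | nil =>
    intro a s cur _
    show revAux cur (a :: s) _ = _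
    rw [show ascTail [a] = [true] from rfl]
    rw [show (a :: s : List ℕ) = [a] ++ (s ++ []) by simp]
    rw [show revAux cur ([a] ++ (s ++ [])) (true :: (List.replicate s.length false ++ [true]))
        = cur ++ revAux [a] (s ++ []) (List.replicate s.length false ++ [true]) from rfl]
    rw [revAux_replicate_false, revAux_nil]
    simp
  | cons x xs ih =>
    intro a s cur hc
    have hax : a ≠ x := (List.isChain_cons_cons.mp hc).1
    have hc' : List.Chain' (· ≠ ·) (x :: xs) := (List.isChain_cons_cons.mp hc).2
    rw [show ascTail (a :: x :: xs) = decide (a < x) :: ascTail (x :: xs) from rfl]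
    by_cases hlt : x < a
    · rw [show popAux (a :: s) (x :: xs) = popAux (x :: a :: s) xs by
        rw [popAux]; simp [hlt]]
      have := ih x (a :: s) cur hc'
      rw [show decide (a < x) = false by simp; omega]
      rw [show (List.replicate s.length false ++ false :: ascTail (x :: xs))
          = (List.replicate (a :: s).length false ++ ascTail (x :: xs)) by
        simp [List.replicate_succ']
        ]
      rw [this]
      simp
    · have halt : a < x := by omega
      rw [show popAux (a :: s) (x :: xs) = (a :: s) ++ popAux [x] xs by
        rw [popAux]; simp [hlt]]
      rw [show decide (a < x) = true by simp [halt]]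
      rw [show ((a :: s) ++ popAux [x] xs) = [a] ++ (s ++ popAux [x] xs) by simp]
      rw [show revAux cur ([a] ++ (s ++ popAux [x] xs))
          (true :: (List.replicate s.length false ++ true :: ascTail (x :: xs)))
          = cur ++ revAux [a] (s ++ popAux [x] xs)
              (List.replicate s.length false ++ true :: ascTail (x :: xs)) from rfl]
      rw [revAux_replicate_false]
      have := ih x [] (s.reverse ++ [a]) hc'
      simp only [List.length_nil, List.replicate_zero, List.nil_append] at this
      rw [this]
      simp

lemma rev_popPass (l : List ℕ) (h : List.Chain' (· ≠ ·) l) :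
    rev (popPass l) (ascWord l) = l := by
  cases l with
  | nil => rfl
  | cons x xs =>
    have := popRev_key xs x [] [] h
    simp only [List.length_nil, List.replicate_zero, List.nil_append, List.reverse_cons,
      List.reverse_nil, List.singleton_append] at this
    simpa [rev, popPass, popAux, ascWord] using this

lemma popAux_perm (l : List ℕ) : ∀ stack : List ℕ, (popAux stack l).Perm (stack ++ l) := by
  induction l with
  | nil => intro stack; simp [popAux]
  | cons x xs ih =>
    intro stack
    cases stack with
    | nil => simpa [popAux] using ih [x]
    | cons a s =>
      rw [popAux]
      split
      · refine (ih (x :: a :: s)).trans ?_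
        exact (List.perm_middle).symm.trans (by simp [List.perm_middle])
      · refine (List.Perm.append_left (a :: s) (ih [x])).trans ?_
        simp

lemma popPass_perm (l : List ℕ) : (popPass l).Perm l := by
  simpa [popPass] using popAux_perm l []

lemma iterate_popPass_perm (l : List ℕ) (i : ℕ) : (popPass^[i] l).Perm l := by
  induction i with
  | zero => rfl
  | succ i ih =>
    rw [Function.iterate_succ_apply']
    exact (popPass_perm _).trans ih

/-- A `k`-pop-stack-sortable permutation is uniquely determined by its sorting
plan `(w(π), w(P(π)), …, w(P^(k-1)(π)))`. -/
theorem sortingPlan_injective (n k : ℕ) (hk : 1 ≤ k) (π σ : List ℕ)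
    (hπ : IsPermOf π n) (hσ : IsPermOf σ n)
    (hπs : popPass^[k] π = idList n) (hσs : popPass^[k] σ = idList n)
    (hw : ∀ i < k, ascWord (popPass^[i] π) = ascWord (popPass^[i] σ)) :
    π = σ := by
  have hid : (idList n).Nodup :=
    List.Nodup.map (fun a b h => by omega) List.nodup_range
  have hnπ : π.Nodup := hπ.nodup_iff.mpr hid
  have hnσ : σ.Nodup := hσ.nodup_iff.mpr hid
  have main : ∀ j, j ≤ k → popPass^[k - j] π = popPass^[k - j] σ := by
    intro j
    induction j with
    | zero =>
      intro _
      simpa using hπs.trans hσs.symm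
    | succ j ih =>
      intro hj
      have h1 := ih (by omega)
      have hkj : k - j = (k - (j + 1)) + 1 := by omega
      rw [hkj, Function.iterate_succ_apply', Function.iterate_succ_apply'] at h1
      set i := k - (j + 1) with hi
      have hwi := hw i (by omega)
      have cπ : List.Chain' (· ≠ ·) (popPass^[i] π) :=
        List.Pairwise.isChain (((iterate_popPass_perm π i).nodup_iff.mpr hnπ))
      have cσ : List.Chain' (· ≠ ·) (popPass^[i] σ) :=
        List.Pairwise.isChain (((iterate_popPass_perm σ i).nodup_iff.mpr hnσ))
      calc popPass^[i] π = rev (popPass (popPass^[i] π)) (ascWord (popPass^[i] π)) :=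
              (rev_popPass _ cπ).symm
        _ = rev (popPass (popPass^[i] σ)) (ascWord (popPass^[i] σ)) := by rw [h1, hwi]
        _ = popPass^[i] σ := rev_popPass _ cσ
  simpa using main k le_rfl
end

section
/- For any permutation π of [n] with n ≥ 1, P^{n-1}(π) is the identity permutation; i.e., every permutation of [n] is sortable by n−1 passes through a pop-stack. -/
namespace PopSortProof

/-! ### The pop pass acts by reversing maximal decreasing runs -/

lemma popAux_nil_input (s : List ℕ) : popAux s [] = s := by cases s <;> rfl

lemma popAux_nil_stack (x : ℕ) (xs : List ℕ) : popAux [] (x :: xs) = popAux [x] xs := rfl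

lemma popAux_cons (a x : ℕ) (s xs : List ℕ) :
    popAux (a :: s) (x :: xs) =
      if x < a then popAux (x :: a :: s) xs else (a :: s) ++ popAux [x] xs := rfl

lemma popAux_run : ∀ (R s ρ : List ℕ), R ≠ [] → R.Chain' (· > ·) →
    (∀ g ∈ R.getLast?, ∀ y ∈ ρ.head?, ¬ y < g) →
    (∀ a ∈ s.head?, ∀ r ∈ R.head?, r < a) →
    popAux s (R ++ ρ) = (R.reverse ++ s) ++ popAux [] ρ := by
  intro R
  induction R with
  | nil => simp
  | cons r R ih =>
    intro s ρ _ hchain hbd hstk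
    simp only [List.cons_append, List.nil_append]
    cases R with
    | nil =>
      simp only [List.nil_append]
      cases s with
      | nil =>
        rw [popAux_nil_stack]
        cases ρ with
        | nil => simp [popAux_nil_input]
        | cons y ys =>
          have hry : ¬ y < r := hbd r (by simp) y (by simp)
          rw [popAux_cons, if_neg hry, popAux_nil_stack]
          simp
      | cons a s' =>
        have hra : r < a := hstk a (by simp) r (by simp)
        rw [popAux_cons, if_pos hra]
        cases ρ with
        | nil => simp [popAux_nil_input]
        | cons y ys =>
          have hry : ¬ y < r := hbd r (by simp) y (by simp)
          rw [popAux_cons, if_neg hry, popAux_nil_stack]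
          simp
    | cons r2 R' =>
      have h12 : r > r2 := (List.isChain_cons_cons.mp hchain).1
      have hch' : (r2 :: R').Chain' (· > ·) := (List.isChain_cons_cons.mp hchain).2
      have hbd' : ∀ g ∈ (r2 :: R').getLast?, ∀ y ∈ ρ.head?, ¬ y < g := by
        intro g hg
        exact hbd g (by rwa [List.getLast?_cons_cons])
      cases s with
      | nil =>
        rw [popAux_nil_stack]
        simp only [List.cons_append]
        have key := ih [r] ρ (by simp) hch' hbd' (by simp [h12])
        simp only [List.cons_append] at key
        rw [key]
        simp [List.append_assoc]
      | cons a s' =>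
        have hra : r < a := hstk a (by simp) r (by simp)
        rw [popAux_cons, if_pos hra]
        simp only [List.cons_append]
        have key := ih (r :: a :: s') ρ (by simp) hch' hbd' (by simp [h12])
        simp only [List.cons_append] at key
        rw [key]
        simp [List.append_assoc]

lemma popPass_decomp (R ρ : List ℕ) (h1 : R ≠ []) (h2 : R.Chain' (· > ·))
    (h3 : ∀ g ∈ R.getLast?, ∀ y ∈ ρ.head?, ¬ y < g) :
    popPass (R ++ ρ) = R.reverse ++ popPass ρ := by
  have := popAux_run R [] ρ h1 h2 h3 (by simp)
  simpa [popPass] using this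


lemma exists_decomp : ∀ (l : List ℕ), l ≠ [] →
    ∃ R ρ, l = R ++ ρ ∧ R ≠ [] ∧ R.Chain' (· > ·) ∧
      (∀ g ∈ R.getLast?, ∀ y ∈ ρ.head?, ¬ y < g) ∧ ρ.length < l.length := by
  intro l
  induction l with
  | nil => simp
  | cons x xs ih =>
    intro _
    cases xs with
    | nil => exact ⟨[x], [], by simp, by simp, List.isChain_singleton _, by simp, by simp⟩
    | cons y ys =>
      by_cases hxy : y < x
      · obtain ⟨R, ρ, heq, hR, hch, hbd, hlen⟩ := ih (by simp)
        cases R with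
        | nil => exact absurd rfl hR
        | cons r R' =>
          have hry : r = y := by
            have h2 := congrArg List.head? heq
            simpa using h2.symm
          refine ⟨x :: r :: R', ρ, ?_, by simp, ?_, ?_, ?_⟩
          · rw [List.cons_append, ← heq]
          · exact List.isChain_cons_cons.mpr ⟨by omega, hch⟩
          · intro g hg
            exact hbd g (by rwa [List.getLast?_cons_cons] at hg)
          · have : ρ.length < (y :: ys).length := hlen
            simp only [List.length_cons] at this ⊢
            omega
      · refine ⟨[x], y :: ys, rfl, by simp, List.isChain_singleton _, ?_, by simp⟩
        intro g hg y' hy'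
        simp at hg hy'
        subst hg; subst hy'
        exact hxy

lemma popPass_nil : popPass [] = [] := rfl

lemma popPass_perm : ∀ (N : ℕ) (l : List ℕ), l.length ≤ N → (popPass l).Perm l := by
  intro N
  induction N with
  | zero =>
    intro l h
    have : l = [] := List.eq_nil_of_length_eq_zero (Nat.le_zero.mp h)
    subst this
    simp [popPass_nil]
  | succ N ih =>
    intro l h
    rcases eq_or_ne l [] with rfl | hne
    · simp [popPass_nil]
    obtain ⟨R, ρ, rfl, hR, hch, hbd, hlt⟩ := exists_decomp l hne
    rw [popPass_decomp R ρ hR hch hbd]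
    have hρ : ρ.length ≤ N := by
      have := (List.length_append (as := R) (bs := ρ)) ▸ h
      have hR1 : 1 ≤ R.length := List.length_pos_iff.mpr hR
      omega
    exact List.Perm.append (List.reverse_perm R) (ih ρ hρ)

lemma popPass_perm' (l : List ℕ) : (popPass l).Perm l := popPass_perm l.length l le_rfl

/-! ### A potential function on 0-1 projections -/

def tword (v : ℕ) (l : List ℕ) : List Bool := l.map (fun x => decide (v < x))

lemma tword_append (v : ℕ) (l₁ l₂ : List ℕ) :
    tword v (l₁ ++ l₂) = tword v l₁ ++ tword v l₂ := List.map_append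

lemma tword_reverse (v : ℕ) (l : List ℕ) :
    tword v l.reverse = (tword v l).reverse := List.map_reverse

lemma tword_cons (v x : ℕ) (l : List ℕ) :
    tword v (x :: l) = decide (v < x) :: tword v l := rfl

def pot : List Bool → ℕ
  | [] => 0
  | false :: w => pot w
  | true :: w => if false ∈ w then max (w.count false) (pot w + 1) else 0

@[simp] lemma pot_nil : pot [] = 0 := rfl
@[simp] lemma pot_false_cons (w : List Bool) : pot (false :: w) = pot w := rfl
@[simp] lemma pot_true_cons (w : List Bool) :
    pot (true :: w) = if false ∈ w then max (w.count false) (pot w + 1) else 0 := rfl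

lemma pot_lt_length : ∀ w : List Bool, w ≠ [] → pot w < w.length := by
  intro w
  induction w with
  | nil => simp
  | cons x w ih =>
    intro _
    cases x
    · rcases eq_or_ne w [] with rfl | hw
      · simp
      · have := ih hw
        simp only [pot_false_cons, List.length_cons]
        omega
    · simp only [pot_true_cons]
      split
      · rename_i hmem
        have hw : w ≠ [] := by rintro rfl; simp at hmem
        have h1 : w.count false ≤ w.length := List.count_le_length
        have h2 : pot w < w.length := ih hw
        simp only [List.length_cons]
        omega
      · simp

lemma pot_rep_false_append : ∀ (b : ℕ) (w : List Bool),
    pot (List.replicate b false ++ w) = pot w := by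
  intro b
  induction b with
  | zero => simp
  | succ b ih => intro w; rw [List.replicate_succ, List.cons_append, pot_false_cons, ih]

lemma pot_rep_true_append : ∀ (a : ℕ) (w : List Bool),
    pot (List.replicate (a + 1) true ++ w) =
      if false ∈ w then max (w.count false + a) (pot w + (a + 1)) else 0 := by
  intro a
  induction a with
  | zero => intro w; simp
  | succ a ih =>
    intro w
    rw [List.replicate_succ, List.cons_append, pot_true_cons]
    have hm : (false ∈ List.replicate (a + 1) true ++ w) ↔ false ∈ w := by
      simp [List.mem_replicate]
    have hc : (List.replicate (a + 1) true ++ w).count false = w.count false := by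
      simp [List.count_append, List.count_replicate]
    rw [ih w]
    by_cases hw : false ∈ w
    · rw [if_pos (hm.mpr hw), if_pos hw, if_pos hw, hc]
      omega
    · rw [if_neg (fun h => hw (hm.mp h)), if_neg hw]

lemma pot_pos : ∀ (X Y : List Bool), false ∈ Y → 0 < pot (X ++ true :: Y) := by
  intro X
  induction X with
  | nil =>
    intro Y hY
    rw [List.nil_append, pot_true_cons, if_pos hY]
    omega
  | cons x X ih =>
    intro Y hY
    cases x
    · rw [List.cons_append, pot_false_cons]; exact ih Y hY
    · rw [List.cons_append, pot_true_cons, if_pos (by simp [hY])]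
      omega

lemma tword_run_shape (v : ℕ) : ∀ (R : List ℕ), R.Chain' (· > ·) →
    ∃ a b, tword v R = List.replicate a true ++ List.replicate b false := by
  intro R
  induction R with
  | nil => exact fun _ => ⟨0, 0, rfl⟩
  | cons x R ih =>
    intro h
    obtain ⟨a, b, hab⟩ := ih h.tail
    by_cases hvx : v < x
    · refine ⟨a + 1, b, ?_⟩
      show decide (v < x) :: tword v R = _
      rw [hab, List.replicate_succ, decide_eq_true hvx, List.cons_append]
    · refine ⟨0, R.length + 1, ?_⟩
      have hall : ∀ y ∈ R, ¬ v < y := by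
        intro y hy
        have hyx : x > y := List.rel_of_pairwise_cons (List.isChain_iff_pairwise.mp h) hy
        omega
      have hrep : tword v R = List.replicate R.length false := by
        rw [List.eq_replicate_iff]
        refine ⟨by simp [tword], ?_⟩
        intro bb hbb
        obtain ⟨y, hy, rfl⟩ := List.mem_map.mp hbb
        simpa using hall y hy
      show decide (v < x) :: tword v R = _
      rw [hrep, List.replicate_succ, decide_eq_false hvx]
      simp

/-! ### The potential decreases under a pop pass -/

lemma mainG : ∀ (N : ℕ) (π : List ℕ), π.length ≤ N → ∀ v : ℕ,
    pot (tword v (popPass π)) = 0 ∨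
      pot (tword v (popPass π)) + 1 ≤ pot (tword v π) := by
  intro N
  induction N with
  | zero =>
    intro π h v
    have : π = [] := List.eq_nil_of_length_eq_zero (Nat.le_zero.mp h)
    subst this
    left; rfl
  | succ N ih =>
    intro π hlen v
    rcases eq_or_ne π [] with rfl | hne
    · left; rfl
    obtain ⟨R, ρ, rfl, hR, hch, hbd, hlt⟩ := exists_decomp π hne
    have hρlen : ρ.length ≤ N := by
      have hR1 : 1 ≤ R.length := List.length_pos_iff.mpr hR
      rw [List.length_append] at hlen
      omega
    have IH := ih ρ hρlen v
    have hperm : (popPass ρ).Perm ρ := popPass_perm' ρ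
    have hpermw : (tword v (popPass ρ)).Perm (tword v ρ) := hperm.map _
    have hc : (tword v (popPass ρ)).count false = (tword v ρ).count false :=
      hpermw.count_eq _
    have hmem : (false ∈ tword v (popPass ρ)) ↔ false ∈ tword v ρ := hpermw.mem_iff
    obtain ⟨a, b, hab⟩ := tword_run_shape v R hch
    have hw' : tword v (popPass (R ++ ρ)) =
        List.replicate b false ++ (List.replicate a true ++ tword v (popPass ρ)) := by
      rw [popPass_decomp R ρ hR hch hbd, tword_append, tword_reverse, hab,
        List.reverse_append, List.reverse_replicate, List.reverse_replicate,
        List.append_assoc]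
    have hw : tword v (R ++ ρ) =
        List.replicate a true ++ (List.replicate b false ++ tword v ρ) := by
      rw [tword_append, hab, List.append_assoc]
    rw [hw', pot_rep_false_append, hw]
    cases a with
    | zero =>
      rw [List.replicate_zero, List.nil_append, List.nil_append, pot_rep_false_append]
      exact IH
    | succ a =>
      rw [pot_rep_true_append, pot_rep_true_append]
      by_cases hfu' : false ∈ tword v (popPass ρ)
      · have hfu : false ∈ tword v ρ := hmem.mp hfu'
        have hfbu : false ∈ List.replicate b false ++ tword v ρ := by
          simp [hfu]
        rw [if_pos hfu', if_pos hfbu, hc]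
        right
        have hcount : (List.replicate b false ++ tword v ρ).count false =
            b + (tword v ρ).count false := by
          simp [List.count_append, List.count_replicate]
        rw [hcount, pot_rep_false_append]
        have hc0pos : 1 ≤ (tword v ρ).count false := List.count_pos_iff.mpr hfu
        cases b with
        | succ b => rcases IH with h0 | hstep <;> omega
        | zero =>
          -- boundary case: the run consists of values > v, and the next value is ≥ its last
          have hRtrue : ∀ x ∈ R, v < x := by
            intro x hx
            have hmm : decide (v < x) ∈ tword v R := List.mem_map_of_mem hx
            rw [hab] at hmm
            simp only [List.replicate_zero, List.append_nil, List.mem_replicate] at hmm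
            exact of_decide_eq_true hmm.2
          have hg : R.getLast? = some (R.getLast hR) := List.getLast?_eq_getLast hR
          have hgR : R.getLast hR ∈ R := List.getLast_mem hR
          cases ρ with
          | nil => exact absurd hfu (by simp [tword])
          | cons p ρ' =>
            have hgp : ¬ p < R.getLast hR := hbd _ (by rw [hg]; rfl) p rfl
            have hvp : v < p := lt_of_lt_of_le (hRtrue _ hgR) (not_lt.mp hgp)
            have hu : tword v (p :: ρ') = true :: tword v ρ' := by
              rw [tword_cons, decide_eq_true hvp]
            have hfu0 : false ∈ tword v ρ' := by
              rw [hu] at hfu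
              simpa using hfu
            have hcu : (tword v (p :: ρ')).count false = (tword v ρ').count false := by
              rw [hu]; simp
            have hpotu : (tword v (p :: ρ')).count false ≤ pot (tword v (p :: ρ')) ∧
                1 ≤ pot (tword v (p :: ρ')) := by
              rw [hcu, hu, pot_true_cons, if_pos hfu0]
              exact ⟨le_max_left _ _, le_trans (by omega) (le_max_right _ _)⟩
            rcases IH with h0 | hstep <;> omega
      · rw [if_neg hfu']
        left; rfl

/-! ### Assembly -/

lemma sorted_of_pot_zero (l : List ℕ) (h : ∀ v, pot (tword v l) = 0) :
    l.Pairwise (· ≤ ·) := by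
  rw [List.pairwise_iff_getElem]
  intro i j hi hj hij
  by_contra hgt
  push_neg at hgt
  have hsplit : l = l.take i ++ l[i] :: l.drop (i + 1) := by
    conv_lhs => rw [← List.take_append_drop i l]
    rw [List.getElem_cons_drop]
  have hpos : 0 < pot (tword l[j] l) := by
    have heq : tword l[j] l =
        tword l[j] (l.take i) ++ true :: tword l[j] (l.drop (i + 1)) := by
      have h0 := congrArg (tword l[j]) hsplit
      rwa [tword_append, tword_cons, decide_eq_true hgt] at h0
    rw [heq]
    apply pot_pos
    have hlen : j - (i + 1) < (l.drop (i + 1)).length := by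
      rw [List.length_drop]; omega
    have hjmem : l[j] ∈ l.drop (i + 1) := by
      have hget : (l.drop (i + 1))[j - (i + 1)]'hlen = l[j] := by
        rw [List.getElem_drop]
        congr 1
        omega
      rw [← hget]
      exact List.getElem_mem _
    exact List.mem_map.mpr ⟨l[j], hjmem, by simp⟩
  have := h l[j]
  omega

lemma idList_length (n : ℕ) : (idList n).length = n := by simp [idList]

lemma idList_sorted (n : ℕ) : (idList n).Pairwise (· ≤ ·) := by
  refine List.Pairwise.map _ (fun a b h => ?_) (List.pairwise_lt_range (n := n))
  omega

lemma sort_aux : ∀ (k : ℕ) (π : List ℕ) (n : ℕ), IsPermOf π n →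
    (∀ v, pot (tword v π) ≤ k) → popPass^[k] π = idList n := by
  intro k
  induction k with
  | zero =>
    intro π n hperm hpot
    simp only [Function.iterate_zero, id_eq]
    exact List.Perm.eq_of_pairwise'
      (sorted_of_pot_zero π fun v => Nat.le_zero.mp (hpot v)) (idList_sorted n) hperm
  | succ k ih =>
    intro π n hperm hpot
    rw [Function.iterate_succ_apply]
    refine ih (popPass π) n ((popPass_perm' π).trans hperm) ?_
    intro v
    rcases mainG π.length π le_rfl v with h0 | hstep
    · omega
    · have := hpot v; omega

end PopSortProof

/-- Every permutation of `[n]` (with `n ≥ 1`) is sortable by `n - 1` passes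
through a pop-stack. -/
theorem sortable_by_n_sub_one (n : ℕ) (hn : 1 ≤ n) (π : List ℕ) (h : IsPermOf π n) :
    popPass^[n - 1] π = idList n := by
  have hlen : π.length = n := h.length_eq.trans (PopSortProof.idList_length n)
  refine PopSortProof.sort_aux (n - 1) π n h ?_
  intro v
  have hne : π ≠ [] := by
    intro e; subst e; simp at hlen; omega
  have h1 : PopSortProof.pot (PopSortProof.tword v π) < (PopSortProof.tword v π).length :=
    PopSortProof.pot_lt_length _ (by simp [PopSortProof.tword, hne])
  have h2 : (PopSortProof.tword v π).length = n := by simp [PopSortProof.tword, hlen]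
  omega
end

section
/- Let a and b be two values that form a violation in row i of a semitrace of order k (i.e., in the permutation α_i, a and b are adjacent with a appearing before b, and either a > b with a bar between them, or a < b with no bar between them, where bars are given by the ascent/descent word of the row below). Then a and b appear in descending order (a before b and a > b, or b before a and b > a, accordingly) in the permutation α_{i+1}. -/
lemma pair_sublist_indexOf {x y : ℕ} : ∀ {l : List ℕ}, [x, y].Sublist l → l.Nodup →
    l.idxOf x < l.idxOf y := by
  intro l
  induction l with
  | nil => intro h; exact absurd h (by simp)
  | cons z t ih =>
    intro h hnd
    have hxy : x ≠ y := by
      have h2 : [x, y].Nodup := h.nodup hnd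
      simpa using h2
    rcases List.nodup_cons.mp hnd with ⟨hz, ht⟩
    cases h with
    | cons _ h' =>
      have hx : x ∈ t := h'.subset (by simp)
      have hy : y ∈ t := h'.subset (by simp)
      have hxz : x ≠ z := fun e => hz (e ▸ hx)
      have hyz : y ≠ z := fun e => hz (e ▸ hy)
      rw [List.idxOf_cons_ne _ hxz.symm, List.idxOf_cons_ne _ hyz.symm]
      exact Nat.succ_lt_succ (ih h' ht)
    | cons_cons _ h' =>
      have hy : y ∈ t := h'.subset (by simp)
      have hyz : y ≠ x := fun e => hxy e.symm
      rw [List.idxOf_cons_self, List.idxOf_cons_ne _ hxy]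
      exact Nat.succ_pos _

lemma revAux_perm : ∀ (l : List ℕ) (μ : List Bool) (cur : List ℕ),
    (revAux cur l μ).Perm (cur ++ l) := by
  intro l
  induction l with
  | nil => intro μ cur; simp [revAux]
  | cons x xs ih =>
    intro μ cur
    cases μ with
    | nil =>
      show (revAux (x :: cur) xs []).Perm _
      exact ((ih [] (x :: cur)).trans List.perm_middle.symm)
    | cons c cs =>
      by_cases hc : c
      · subst hc
        show (cur ++ revAux [x] xs cs).Perm _
        exact (List.Perm.append_left cur (ih cs [x]))
      · simp only [Bool.not_eq_true] at hc; subst hc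
        show (revAux (x :: cur) xs cs).Perm _
        exact ((ih cs (x :: cur)).trans List.perm_middle.symm)

lemma revAux_keep : ∀ (l : List ℕ) (μ : List Bool) (cur : List ℕ) (b a : ℕ),
    [b, a].Sublist cur → [b, a].Sublist (revAux cur l μ) := by
  intro l
  induction l with
  | nil => intro μ cur b a h; simpa [revAux] using h
  | cons x xs ih =>
    intro μ cur b a h
    cases μ with
    | nil => exact ih [] (x :: cur) b a (h.trans (List.sublist_cons_self x cur))
    | cons c cs =>
      by_cases hc : c
      · subst hc
        show [b, a].Sublist (cur ++ revAux [x] xs cs)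
        exact h.trans (List.sublist_append_left _ _)
      · simp only [Bool.not_eq_true] at hc; subst hc
        exact ih cs (x :: cur) b a (h.trans (List.sublist_cons_self x cur))

lemma revAux_head_true : ∀ (xs : List ℕ) (μ : List Bool) (cur0 : List ℕ) (a b : ℕ),
    μ.getD 0 false = true → [a, b].Sublist (revAux (a :: cur0) (b :: xs) μ) := by
  intro xs μ cur0 a b hμ
  cases μ with
  | nil => simp at hμ
  | cons c cs =>
    simp only [List.getD, List.getElem?_cons_zero, Option.getD_some] at hμ
    subst hμ
    show [a, b].Sublist ((a :: cur0) ++ revAux [b] xs cs)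
    have hb : b ∈ revAux [b] xs cs := by
      have := (revAux_perm xs cs [b]).mem_iff (a := b)
      simp [this]
    refine List.cons_sublist_cons.mpr ?_
    exact List.singleton_sublist.mpr (List.mem_append_right _ hb)

lemma revAux_head_false : ∀ (xs : List ℕ) (μ : List Bool) (cur0 : List ℕ) (a b : ℕ),
    μ.getD 0 false = false → [b, a].Sublist (revAux (a :: cur0) (b :: xs) μ) := by
  intro xs μ cur0 a b hμ
  cases μ with
  | nil =>
    exact revAux_keep xs [] (b :: a :: cur0) b a (by simp)
  | cons c cs =>
    simp only [List.getD, List.getElem?_cons_zero, Option.getD_some] at hμ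
    subst hμ
    exact revAux_keep xs cs (b :: a :: cur0) b a (by simp)

lemma revAux_pair : ∀ (l : List ℕ) (j : ℕ) (μ : List Bool) (cur : List ℕ) (a b : ℕ),
    j + 1 < l.length → l.getD j 0 = a → l.getD (j + 1) 0 = b →
    (μ.getD (j + 1) false = true → [a, b].Sublist (revAux cur l μ)) ∧
    (μ.getD (j + 1) false = false → [b, a].Sublist (revAux cur l μ)) := by
  intro l
  induction l with
  | nil => intro j μ cur a b h; simp at h
  | cons x xs ih =>
    intro j μ cur a b hlen hga hgb
    cases j with
    | zero =>
      -- a = x, b is head of xs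
      simp only [List.getD, List.getElem?_cons_zero, Option.getD_some] at hga
      subst hga
      cases xs with
      | nil => simp at hlen
      | cons y ys =>
        have hby : b = y := by
          simpa [List.getD] using hgb.symm
        subst hby
        cases μ with
        | nil =>
          constructor
          · intro h; simp at h
          · intro _
            exact revAux_head_false ys [] cur x b rfl
        | cons c cs =>
          have hget : (c :: cs).getD 1 false = cs.getD 0 false := by
            cases cs <;> simp [List.getD]
          by_cases hc : c
          · subst hc
            constructor
            · intro h
              show [x, b].Sublist (cur ++ revAux [x] (b :: ys) cs)
              refine (revAux_head_true ys cs [] x b ?_).trans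
                (List.sublist_append_right _ _)
              rw [← hget]; exact h
            · intro h
              show [b, x].Sublist (cur ++ revAux [x] (b :: ys) cs)
              refine (revAux_head_false ys cs [] x b ?_).trans
                (List.sublist_append_right _ _)
              rw [← hget]; exact h
          · simp only [Bool.not_eq_true] at hc; subst hc
            constructor
            · intro h
              show [x, b].Sublist (revAux (x :: cur) (b :: ys) cs)
              exact revAux_head_true ys cs cur x b (by rw [← hget]; exact h)
            · intro h
              show [b, x].Sublist (revAux (x :: cur) (b :: ys) cs)
              exact revAux_head_false ys cs cur x b (by rw [← hget]; exact h)
    | succ j' =>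
      have hlen' : j' + 1 < xs.length := by
        simpa [Nat.succ_lt_succ_iff] using hlen
      have hga' : xs.getD j' 0 = a := by
        simpa [List.getD] using hga
      have hgb' : xs.getD (j' + 1) 0 = b := by
        simpa [List.getD] using hgb
      cases μ with
      | nil =>
        have IH := ih j' [] (x :: cur) a b hlen' hga' hgb'
        constructor
        · intro h; simp at h
        · intro _; exact IH.2 rfl
      | cons c cs =>
        have hget : (c :: cs).getD (j' + 1 + 1) false = cs.getD (j' + 1) false := by
          simp [List.getD]
        have IH := ih j' cs (x :: cur) a b hlen' hga' hgb'
        by_cases hc : c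
        · subst hc
          constructor
          · intro h
            show [a, b].Sublist (cur ++ revAux [x] xs cs)
            have h2 := ih j' cs [x] a b hlen' hga' hgb'
            exact (h2.1 (by rw [← hget]; exact h)).trans (List.sublist_append_right _ _)
          · intro h
            show [b, a].Sublist (cur ++ revAux [x] xs cs)
            have h2 := ih j' cs [x] a b hlen' hga' hgb'
            exact (h2.2 (by rw [← hget]; exact h)).trans (List.sublist_append_right _ _)
        · simp only [Bool.not_eq_true] at hc; subst hc
          constructor
          · intro h
            show [a, b].Sublist (revAux (x :: cur) xs cs)
            exact IH.1 (by rw [← hget]; exact h)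
          · intro h
            show [b, a].Sublist (revAux (x :: cur) xs cs)
            exact IH.2 (by rw [← hget]; exact h)

/-- If two values `a` and `b` form a violation in row `i` of a semitrace
(adjacent, and either a descent separated by a bar or an ascent not separated by
a bar), then they appear in descending order in row `i + 1`. -/
theorem violation_descending (n k : ℕ) (α : ℕ → List ℕ) (μ : ℕ → List Bool)
    (hT : IsSemitrace n k α μ) (i : ℕ) (hi1 : 1 ≤ i) (hik : i ≤ k)
    (j a b : ℕ) (hj : j + 1 < (α i).length)
    (ha : (α i).getD j 0 = a) (hb : (α i).getD (j + 1) 0 = b)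
    (hviol : (b < a ∧ (μ i).getD (j + 1) false = true) ∨
             (a < b ∧ (μ i).getD (j + 1) false = false)) :
    (α (i + 1)).idxOf (max a b) < (α (i + 1)).idxOf (min a b) := by
  obtain ⟨hperm, _, _, hrev⟩ := hT
  have hα : α (i + 1) = revAux [] (α i) (μ i) := hrev i hi1 hik
  have hnd : (α (i + 1)).Nodup := by
    have hp : IsPermOf (α (i + 1)) n :=
      hperm (i + 1) (Nat.le_add_left 1 i) (Nat.add_le_add_right hik 1)
    have hid : (idList n).Nodup :=
      List.Nodup.map (fun p q h => by omega) (List.nodup_range (n := n))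
    exact hp.nodup_iff.mpr hid
  have hpair := revAux_pair (α i) j (μ i) [] a b hj ha hb
  rcases hviol with ⟨hba, hμ⟩ | ⟨hab, hμ⟩
  · rw [max_eq_left hba.le, min_eq_right hba.le]
    exact pair_sublist_indexOf (hα ▸ hpair.1 hμ) hnd
  · rw [max_eq_right hab.le, min_eq_left hab.le]
    exact pair_sublist_indexOf (hα ▸ hpair.2 hμ) hnd
end
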